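/- In the game G, suppose arccos(⟪θ*_A, θ*_D⟫) < π − arcsin(α/(1−α)) and let s = sign(⟪θ*_D, R θ*_A⟫). If (θ'_A, θ'_D) is any pure strategy Nash equilibrium of G, then θ'_D = s · R θ*_A and θ'_A = (√(1 − 2α) · θ*_A − α s · R θ*_A)/(1 − α). -/

import Mathlib

open Real

/-- The aggregate vector `(α θ_D + (1−α) θ_A)/‖α θ_D + (1−α) θ_A‖`. -/
noncomputable def aggregate (α : ℝ) (θA θD : EuclideanSpace ℝ (Fin 2)) :
    EuclideanSpace ℝ (Fin 2) :=
  (‖α • θD + (1 - α) • θA‖)⁻¹ • (α • θD + (1 - α) • θA)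

/-- `(θA', θD')` is a pure strategy Nash equilibrium of the game `G` with minority share `α`
and true preference vectors `θAstar`, `θDstar`: both strategies are unit vectors, and each is
a best response (payoffs are inner products of the aggregate with the true vectors). -/
def IsNashEq (α : ℝ) (θAstar θDstar θA' θD' : EuclideanSpace ℝ (Fin 2)) : Prop :=
  ‖θA'‖ = 1 ∧ ‖θD'‖ = 1 ∧
  (∀ θA : EuclideanSpace ℝ (Fin 2), ‖θA‖ = 1 →
    (inner ℝ (aggregate α θA θD') θAstar : ℝ) ≤ (inner ℝ (aggregate α θA' θD') θAstar : ℝ)) ∧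
  (∀ θD : EuclideanSpace ℝ (Fin 2), ‖θD‖ = 1 →
    (inner ℝ (aggregate α θA' θD) θDstar : ℝ) ≤ (inner ℝ (aggregate α θA' θD') θDstar : ℝ))

/-- Rotation by `π/2`: `R(x, y) = (−y, x)`. -/
noncomputable def Rot (x : EuclideanSpace ℝ (Fin 2)) : EuclideanSpace ℝ (Fin 2) :=
  (WithLp.equiv 2 (Fin 2 → ℝ)).symm ![-(x 1), x 0]

lemma inner2 (x y : EuclideanSpace ℝ (Fin 2)) : (inner ℝ x y : ℝ) = x 0 * y 0 + x 1 * y 1 := by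
  simp [PiLp.inner_apply, Fin.sum_univ_two, RCLike.inner_apply, mul_comm]

lemma normsq2 (x : EuclideanSpace ℝ (Fin 2)) : ‖x‖ = Real.sqrt (x 0 ^ 2 + x 1 ^ 2) := by
  rw [EuclideanSpace.norm_eq]
  simp [Fin.sum_univ_two, sq_abs]

lemma ext2 {x y : EuclideanSpace ℝ (Fin 2)} (h0 : x 0 = y 0) (h1 : x 1 = y 1) : x = y := by
  apply PiLp.ext
  intro i
  fin_cases i <;> assumption

noncomputable def mk2 (a b : ℝ) : EuclideanSpace ℝ (Fin 2) :=
  (WithLp.equiv 2 (Fin 2 → ℝ)).symm ![a, b]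

@[simp] lemma mk2_zero (a b : ℝ) : mk2 a b 0 = a := rfl
@[simp] lemma mk2_one (a b : ℝ) : mk2 a b 1 = b := rfl

lemma unit_coords (x : EuclideanSpace ℝ (Fin 2)) (hx : ‖x‖ = 1) :
    x 0 ^ 2 + x 1 ^ 2 = 1 := by
  have h := normsq2 x
  rw [hx] at h
  have h2 := Real.sqrt_eq_one.mp h.symm
  linarith

lemma unit_mk2 (a b : ℝ) (h : a^2 + b^2 = 1) : ‖mk2 a b‖ = 1 := by
  rw [normsq2, mk2_zero, mk2_one, h, Real.sqrt_one]

lemma agg_inner (α : ℝ) (x y z : EuclideanSpace ℝ (Fin 2)) :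
    (inner ℝ (aggregate α x y) z : ℝ) =
      (Real.sqrt ((α * y 0 + (1-α) * x 0)^2 + (α * y 1 + (1-α) * x 1)^2))⁻¹ *
      ((α * y 0 + (1-α) * x 0) * z 0 + (α * y 1 + (1-α) * x 1) * z 1) := by
  have e : ∀ i, (α • y + (1-α) • x : EuclideanSpace ℝ (Fin 2)) i = α * y i + (1-α) * x i := by
    intro i
    simp [PiLp.add_apply, PiLp.smul_apply, smul_eq_mul]
  rw [aggregate, inner2, normsq2]
  simp only [PiLp.smul_apply, smul_eq_mul, e]
  ring


lemma aux_mu_pos (α t D : ℝ) (hα2 : 0 < 1 - 2*α) (hD : 0 ≤ D)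
    (hDsq : D^2 = α^2*t^2 + 1 - 2*α) : 0 < α*t + D := by
  rcases le_or_gt (α*t) 0 with h | h
  · have h3 : (α*t)^2 < D^2 := by nlinarith
    have h4 : -(α*t) < D := by nlinarith [sq_nonneg (α*t + D)]
    linarith
  · positivity

lemma aux_le_of_sq (S L : ℝ) (hL : 0 < L) (hS : S^2 ≤ L^2) : S ≤ L := by
  nlinarith


lemma foc (n0 n1 n2 m0 m1 m2 : ℝ)
    (hQ0 : 0 < m0 + m1)
    (hmax : ∀ t : ℝ, (n0 + n1 * Real.cos t + n2 * Real.sin t) /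
        Real.sqrt (m0 + m1 * Real.cos t + m2 * Real.sin t)
        ≤ (n0 + n1) / Real.sqrt (m0 + m1)) :
    2 * n2 * (m0 + m1) = (n0 + n1) * m2 := by
  set G : ℝ → ℝ := fun t => (n0 + n1 * Real.cos t + n2 * Real.sin t) /
      Real.sqrt (m0 + m1 * Real.cos t + m2 * Real.sin t) with hG
  have hQ0' : m0 + m1 * Real.cos 0 + m2 * Real.sin 0 ≠ 0 := by
    simp; linarith
  have hsq : Real.sqrt (m0 + m1 * Real.cos 0 + m2 * Real.sin 0) ≠ 0 := by
    simp only [Real.cos_zero, Real.sin_zero, mul_one, mul_zero, add_zero]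
    positivity
  have hN : HasDerivAt (fun t : ℝ => n0 + n1 * Real.cos t + n2 * Real.sin t)
      (n1 * (-Real.sin 0) + n2 * Real.cos 0) 0 := by
    exact (((Real.hasDerivAt_cos 0).const_mul n1).const_add n0).add
      ((Real.hasDerivAt_sin 0).const_mul n2)
  have hM : HasDerivAt (fun t : ℝ => m0 + m1 * Real.cos t + m2 * Real.sin t)
      (m1 * (-Real.sin 0) + m2 * Real.cos 0) 0 := by
    exact (((Real.hasDerivAt_cos 0).const_mul m1).const_add m0).add
      ((Real.hasDerivAt_sin 0).const_mul m2)
  have hS := hM.sqrt hQ0'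
  have hGd := hN.div hS hsq
  have hloc : IsLocalMax G 0 := by
    apply Filter.Eventually.of_forall
    intro t
    have := hmax t
    simpa [hG] using this
  have hz := hloc.hasDerivAt_eq_zero hGd
  rw [Real.sin_zero, Real.cos_zero] at hz
  simp only [mul_zero, neg_zero, mul_one, zero_add, mul_zero, add_zero] at hz
  rw [Real.sin_zero, Real.cos_zero] at hsq
  simp only [mul_one, mul_zero, add_zero] at hsq
  have h2 : Real.sqrt (m0 + m1) ^ 2 = m0 + m1 := Real.sq_sqrt hQ0.le
  rw [div_eq_zero_iff] at hz
  rcases hz with hz | hz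
  · have := sub_eq_zero.mp hz
    field_simp at this
    linear_combination this - 2*n2*h2
  · exact absurd hz (pow_ne_zero 2 hsq)

set_option maxHeartbeats 2000000 in
lemma masterA (α a0 a1 d0 d1 p0 p1 q0 q1 : ℝ)
    (hα : 0 < α) (hα' : α < 1/2)
    (ua : a0^2+a1^2 = 1) (ud : d0^2+d1^2 = 1) (up : p0^2+p1^2 = 1) (uq : q0^2+q1^2 = 1)
    (hσ : a0*d1 - a1*d0 ≠ 0)
    (hA : ∀ x0 x1 : ℝ, x0^2+x1^2 = 1 →
      (Real.sqrt ((α*q0 + (1-α)*x0)^2 + (α*q1 + (1-α)*x1)^2))⁻¹ *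
        ((α*q0 + (1-α)*x0)*a0 + (α*q1 + (1-α)*x1)*a1)
      ≤ (Real.sqrt ((α*q0 + (1-α)*p0)^2 + (α*q1 + (1-α)*p1)^2))⁻¹ *
        ((α*q0 + (1-α)*p0)*a0 + (α*q1 + (1-α)*p1)*a1))
    (hD : ∀ y0 y1 : ℝ, y0^2+y1^2 = 1 →
      (Real.sqrt ((α*y0 + (1-α)*p0)^2 + (α*y1 + (1-α)*p1)^2))⁻¹ *
        ((α*y0 + (1-α)*p0)*d0 + (α*y1 + (1-α)*p1)*d1)
      ≤ (Real.sqrt ((α*q0 + (1-α)*p0)^2 + (α*q1 + (1-α)*p1)^2))⁻¹ *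
        ((α*q0 + (1-α)*p0)*d0 + (α*q1 + (1-α)*p1)*d1)) :
    0 < (a0*d1-a1*d0)*(a0*q1-a1*q0) ∧
    (a0*q1-a1*q0)^2 = 1 ∧
    q0 = -(a0*q1-a1*q0)*a1 ∧ q1 = (a0*q1-a1*q0)*a0 ∧
    (1-α)*p0 = Real.sqrt (1-2*α)*a0 + α*(a0*q1-a1*q0)*a1 ∧
    (1-α)*p1 = Real.sqrt (1-2*α)*a1 - α*(a0*q1-a1*q0)*a0 := by
  have hα1 : (0:ℝ) < 1 - α := by linarith
  have hα2 : (0:ℝ) < 1 - 2*α := by linarith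
  obtain ⟨c0, hc0def⟩ : ∃ x : ℝ, x = α*q0 + (1-α)*p0 := ⟨_, rfl⟩
  obtain ⟨c1, hc1def⟩ : ∃ x : ℝ, x = α*q1 + (1-α)*p1 := ⟨_, rfl⟩
  rw [← hc0def, ← hc1def] at hA hD
  have hpq1 : p0*q0 + p1*q1 ≥ -1 := by
    linarith [sq_nonneg (p0+q0), sq_nonneg (p1+q1), up, uq]
  have hsum : c0^2 + c1^2 = α^2 + (1-α)^2 + 2*α*(1-α)*(p0*q0+p1*q1) := by
    rw [hc0def, hc1def]; linear_combination α^2*uq + (1-α)^2*up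
  have hcsq : (1-2*α)^2 ≤ c0^2 + c1^2 := by
    have hm := mul_nonneg (mul_nonneg hα.le hα1.le)
      (by linarith : (0:ℝ) ≤ p0*q0+p1*q1+1)
    linarith [hsum]
  have hcpos : (0:ℝ) < c0^2 + c1^2 := lt_of_lt_of_le (by positivity) hcsq
  obtain ⟨L, hLdef⟩ : ∃ x : ℝ, x = Real.sqrt (c0^2 + c1^2) := ⟨_, rfl⟩
  rw [← hLdef] at hA hD
  have hLpos : 0 < L := hLdef ▸ Real.sqrt_pos.mpr hcpos
  have hL2 : L^2 = c0^2 + c1^2 := hLdef ▸ Real.sq_sqrt hcpos.le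
  have hS2 : (c0*a0+c1*a1)^2 + (c0*a1-c1*a0)^2 = L^2 := by
    linear_combination (c0^2+c1^2)*ua - hL2
  have hin : (0:ℝ) ≤ α^2*(q0*a0+q1*a1)^2 + 1 - 2*α := by
    linarith [sq_nonneg (α*(q0*a0+q1*a1))]
  have hca : c0*a0 + c1*a1 = L := by
    obtain ⟨D1, hD1def⟩ : ∃ x : ℝ, x = Real.sqrt (α^2*(q0*a0+q1*a1)^2 + 1 - 2*α) := ⟨_, rfl⟩
    have hD1sq : D1^2 = α^2*(q0*a0+q1*a1)^2 + 1 - 2*α := hD1def ▸ Real.sq_sqrt hin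
    have hD1nn : 0 ≤ D1 := hD1def ▸ Real.sqrt_nonneg _
    obtain ⟨μ, hμdef⟩ : ∃ x : ℝ, x = α*(q0*a0+q1*a1) + D1 := ⟨_, rfl⟩
    have hμpos : 0 < μ := hμdef ▸ aux_mu_pos α (q0*a0+q1*a1) D1 hα2 hD1nn hD1sq
    have hμeq : μ^2 - 2*μ*α*(q0*a0+q1*a1) + α^2 = (1-α)^2 := by
      have he : (μ - α*(q0*a0+q1*a1))^2 = D1^2 := by rw [hμdef]; ring
      linear_combination he + hD1sq
    have key : (μ*a0 - α*q0)^2 + (μ*a1 - α*q1)^2 = (1-α)^2 := by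
      linear_combination μ^2*ua + α^2*uq + hμeq
    have hxunit : ((μ*a0 - α*q0)/(1-α))^2 + ((μ*a1 - α*q1)/(1-α))^2 = 1 := by
      field_simp
      linear_combination key
    have hinst := hA ((μ*a0 - α*q0)/(1-α)) ((μ*a1 - α*q1)/(1-α)) hxunit
    have e0 : α*q0 + (1-α)*((μ*a0 - α*q0)/(1-α)) = μ*a0 := by field_simp; ring
    have e1 : α*q1 + (1-α)*((μ*a1 - α*q1)/(1-α)) = μ*a1 := by field_simp; ring
    rw [e0, e1] at hinst
    have e2 : (μ*a0)^2 + (μ*a1)^2 = μ^2 := by linear_combination μ^2*ua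
    rw [e2, Real.sqrt_sq hμpos.le] at hinst
    have e3 : μ⁻¹ * (μ*a0*a0 + μ*a1*a1) = 1 := by
      rw [inv_mul_eq_div, div_eq_one_iff_eq hμpos.ne']
      linear_combination μ*ua
    rw [e3] at hinst
    have hge : L ≤ c0*a0 + c1*a1 := by
      have h4 := (le_inv_mul_iff₀ hLpos).mp hinst
      linarith [h4]
    have hle : c0*a0 + c1*a1 ≤ L :=
      aux_le_of_sq _ _ hLpos (by linarith [hS2, sq_nonneg (c0*a1 - c1*a0)])
    linarith
  have hcr : c0*a1 - c1*a0 = 0 := by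
    have h0 : (c0*a1 - c1*a0)^2 = 0 := by
      linear_combination hS2 - (c0*a0+c1*a1+L)*hca
    exact pow_eq_zero_iff (n := 2) (by norm_num) |>.mp h0
  have hc0L : c0 = L*a0 := by linear_combination a0*hca + a1*hcr - c0*ua
  have hc1L : c1 = L*a1 := by linear_combination a1*hca - a0*hcr - c1*ua
  -- FOC for player D
  have hnn : (1-α)*(p0*d0+p1*d1) + α*(q0*d0+q1*d1) = c0*d0 + c1*d1 := by
    linear_combination -d0*hc0def - d1*hc1def
  have hm01 : α^2+(1-α)^2 + 2*α*(1-α)*(p0*q0+p1*q1) = L^2 := by linarith [hsum, hL2]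
  have hQ0 : (0:ℝ) < (α^2+(1-α)^2) + 2*α*(1-α)*(p0*q0+p1*q1) := by
    have := sq_nonneg L
    nlinarith [hm01, hLpos]
  have hmax : ∀ t : ℝ, ((1-α)*(p0*d0+p1*d1) + α*(q0*d0+q1*d1) * Real.cos t
        + α*(q0*d1 - q1*d0) * Real.sin t) /
      Real.sqrt ((α^2+(1-α)^2) + 2*α*(1-α)*(p0*q0+p1*q1) * Real.cos t
        + 2*α*(1-α)*(p1*q0 - p0*q1) * Real.sin t)
      ≤ ((1-α)*(p0*d0+p1*d1) + α*(q0*d0+q1*d1)) /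
      Real.sqrt ((α^2+(1-α)^2) + 2*α*(1-α)*(p0*q0+p1*q1)) := by
    intro t
    have hu : (q0*Real.cos t - q1*Real.sin t)^2 + (q1*Real.cos t + q0*Real.sin t)^2 = 1 := by
      linear_combination (Real.cos t^2 + Real.sin t^2)*uq + Real.sin_sq_add_cos_sq t
    have hinst := hD (q0*Real.cos t - q1*Real.sin t) (q1*Real.cos t + q0*Real.sin t) hu
    have eW : (α*(q0*Real.cos t - q1*Real.sin t)+(1-α)*p0)^2
        + (α*(q1*Real.cos t + q0*Real.sin t)+(1-α)*p1)^2
        = (α^2+(1-α)^2) + 2*α*(1-α)*(p0*q0+p1*q1) * Real.cos t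
          + 2*α*(1-α)*(p1*q0 - p0*q1) * Real.sin t := by
      linear_combination (α^2*(Real.cos t^2+Real.sin t^2))*uq
        + α^2*(Real.sin_sq_add_cos_sq t) + (1-α)^2*up
    have eN : (α*(q0*Real.cos t - q1*Real.sin t)+(1-α)*p0)*d0
        + (α*(q1*Real.cos t + q0*Real.sin t)+(1-α)*p1)*d1
        = (1-α)*(p0*d0+p1*d1) + α*(q0*d0+q1*d1) * Real.cos t
          + α*(q0*d1 - q1*d0) * Real.sin t := by ring
    rw [eW, eN, inv_mul_eq_div] at hinst
    have eR : L⁻¹ * (c0*d0+c1*d1) = ((1-α)*(p0*d0+p1*d1)+α*(q0*d0+q1*d1)) /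
        Real.sqrt ((α^2+(1-α)^2) + 2*α*(1-α)*(p0*q0+p1*q1)) := by
      rw [show (α^2+(1-α)^2) + 2*α*(1-α)*(p0*q0+p1*q1) = c0^2+c1^2 by linarith [hsum],
        ← hLdef, inv_mul_eq_div, hnn]
    rw [eR] at hinst
    exact hinst
  have hfoc := foc ((1-α)*(p0*d0+p1*d1)) (α*(q0*d0+q1*d1)) (α*(q0*d1 - q1*d0))
    (α^2+(1-α)^2) (2*α*(1-α)*(p0*q0+p1*q1)) (2*α*(1-α)*(p1*q0 - p0*q1)) hQ0 hmax
  have hpr : (1-α)*(p1*q0 - p0*q1) = L*(a1*q0 - a0*q1) := by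
    linear_combination q0*hc1L - q1*hc0L - q0*hc1def + q1*hc0def
  have hcd : c0*d0 + c1*d1 = L*(a0*d0+a1*d1) := by
    linear_combination d0*hc0L + d1*hc1L
  have h6 : (2*α)*((q0*d1-q1*d0)*L^2) = (2*α)*((a0*d0+a1*d1)*(a1*q0-a0*q1)*L^2) := by
    linear_combination hfoc - 2*α*(q0*d1-q1*d0)*hm01
      + 2*α*((1-α)*(p0*d0+p1*d1)+α*(q0*d0+q1*d1))*hpr
      + 2*α*L*(a1*q0-a0*q1)*hnn + 2*α*L*(a1*q0-a0*q1)*hcd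
  have h7 : (q0*d1-q1*d0) = (a0*d0+a1*d1)*(a1*q0-a0*q1) :=
    mul_right_cancel₀ (pow_ne_zero 2 hLpos.ne')
      (mul_left_cancel₀ (by positivity : (2*α : ℝ) ≠ 0) h6)
  have h8 : (a0*d1-a1*d0)*(a0*q0+a1*q1) = 0 := by
    linear_combination (q0*d1-q1*d0)*ua + h7
  have haq : a0*q0 + a1*q1 = 0 := by
    rcases mul_eq_zero.mp h8 with h | h
    · exact absurd h hσ
    · exact h
  obtain ⟨ε, hεv⟩ : ∃ x : ℝ, x = a0*q1 - a1*q0 := ⟨_, rfl⟩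
  obtain ⟨kv, hkv⟩ : ∃ x : ℝ, x = a0*d0 + a1*d1 := ⟨_, rfl⟩
  obtain ⟨σv, hσvv⟩ : ∃ x : ℝ, x = a0*d1 - a1*d0 := ⟨_, rfl⟩
  rw [← hσvv] at hσ
  have hε2 : ε^2 = 1 := by
    rw [hεv]; linear_combination (q0^2+q1^2)*ua + uq - (a0*q0+a1*q1)*haq
  have hεne : ε ≠ 0 := by
    intro h; rw [h] at hε2; norm_num at hε2
  have hq0 : q0 = -ε*a1 := by rw [hεv]; linear_combination a0*haq - q0*ua
  have hq1 : q1 = ε*a0 := by rw [hεv]; linear_combination a1*haq - q1*ua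
  have hcq : c0*q0 + c1*q1 = 0 := by linear_combination q0*hc0L + q1*hc1L + L*haq
  have hpq : (1-α)*(p0*q0+p1*q1) = -α := by
    linear_combination hcq - α*uq - q0*hc0def - q1*hc1def
  have hLsq : L^2 = 1 - 2*α := by linear_combination hL2 + hsum + 2*α*hpq
  have hLval : L = Real.sqrt (1-2*α) := by rw [← hLsq, Real.sqrt_sq hLpos.le]
  have hp0m : (1-α)*p0 = L*a0 + α*ε*a1 := by linear_combination hc0L - hc0def - α*hq0
  have hp1m : (1-α)*p1 = L*a1 - α*ε*a0 := by linear_combination hc1L - hc1def - α*hq1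
  have hkσ : kv^2 + σv^2 = 1 := by
    rw [hkv, hσvv]; linear_combination (d0^2+d1^2)*ua + ud
  have hσsqpos : 0 < σv^2 := lt_of_le_of_ne (sq_nonneg _) (Ne.symm (pow_ne_zero 2 hσ))
  have hqd : q0*d0 + q1*d1 = σv*ε := by
    rw [hσvv]; linear_combination d0*hq0 + d1*hq1
  have hcdk : c0*d0 + c1*d1 = L*kv := by rw [hkv]; exact hcd
  have hpdk : (1-α)*(p0*d0+p1*d1) = L*kv - α*(σv*ε) := by
    rw [hkv, hσvv]; linear_combination d0*hp0m + d1*hp1m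
  -- the sign of ε
  have hsign : 0 < σv*ε := by
    rcases lt_trichotomy (σv*ε) 0 with hlt | heq | hgt
    · exfalso
      -- deviation -q
      have hR2pos : (0:ℝ) < L^2 + 4*α^2 := by positivity
      obtain ⟨R, hRdef⟩ : ∃ x : ℝ, x = Real.sqrt (L^2+4*α^2) := ⟨_, rfl⟩
      have hR2 : R^2 = L^2 + 4*α^2 := hRdef ▸ Real.sq_sqrt hR2pos.le
      have hRpos : 0 < R := hRdef ▸ Real.sqrt_pos.mpr hR2pos
      have hinstm := hD (-q0) (-q1) (by linear_combination uq)
      have eW : (α*(-q0)+(1-α)*p0)^2 + (α*(-q1)+(1-α)*p1)^2 = R^2 := by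
        linear_combination -((1-α)*p0 - α*q0 + c0 - 2*α*q0)*hc0def
          - ((1-α)*p1 - α*q1 + c1 - 2*α*q1)*hc1def - hL2 - 4*α*hcq + 4*α^2*uq - hR2
      have eN : (α*(-q0)+(1-α)*p0)*d0 + (α*(-q1)+(1-α)*p1)*d1
          = L*kv - 2*α*(σv*ε) := by
        linear_combination -d0*hc0def - d1*hc1def + hcdk - 2*α*hqd
      rw [eW, Real.sqrt_sq hRpos.le, eN, hcdk, inv_mul_cancel_left₀ hLpos.ne'] at hinstm
      have hstar : L*kv - 2*α*(σv*ε) ≤ R*kv := (inv_mul_le_iff₀ hRpos).mp hinstm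
      have hLR : L ≤ R := aux_le_of_sq L R hRpos (by linarith [hR2, sq_nonneg α])
      have hkpos : 0 < kv := by
        by_contra hk0
        push_neg at hk0
        have h11 : R*kv ≤ L*kv := mul_le_mul_of_nonpos_right hLR hk0
        have h12 := mul_pos hα (neg_pos.mpr hlt)
        linarith [hstar, h11, h12]
      have hLHSpos : 0 < L*kv - 2*α*(σv*ε) := by
        linarith [mul_pos hLpos hkpos, mul_pos hα (neg_pos.mpr hlt)]
      have hsq_ineq : (L*kv - 2*α*(σv*ε))^2 ≤ (R*kv)^2 := by
        linarith [mul_self_le_mul_self hLHSpos.le hstar]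
      have hRk : R^2*kv^2 = (L^2+4*α^2)*kv^2 := by rw [hR2]
      have h9 : -(4*α)*(L*kv)*(σv*ε) + 4*α^2*(σv*ε)^2 ≤ 4*α^2*kv^2 := by
        linarith [hsq_ineq, hRk]
      have h10 : (α*kv)*0 ≤ (α*kv)*(α*kv + L*(σv*ε)) := by
        linarith [h9, sq_nonneg (α*(σv*ε))]
      have hKey : 0 ≤ α*kv + L*(σv*ε) :=
        le_of_mul_le_mul_left h10 (by positivity)
      -- deviation achieving aggregate direction d
      have hP1 : 0 ≤ (α*kv + L*(σv*ε))*(-(σv*ε)) :=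
        mul_nonneg hKey (by linarith)
      have hdisc_eq : (L*kv - α*(σv*ε))^2 - (1-2*α)
          = 2*L*((α*kv + L*(σv*ε))*(-(σv*ε))) + (α^2+L^2)*(σv*ε)^2 := by
        linear_combination L^2*σv^2*hε2 + L^2*hkσ + hLsq
      have hdisc : (0:ℝ) ≤ (L*kv - α*(σv*ε))^2 - (1-2*α) := by
        rw [hdisc_eq]
        have ht1 := mul_nonneg (by positivity : (0:ℝ) ≤ 2*L) hP1
        have ht2 := mul_nonneg (by positivity : (0:ℝ) ≤ α^2+L^2) (sq_nonneg (σv*ε))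
        linarith [ht1, ht2]
      obtain ⟨Dd, hDdv⟩ : ∃ x : ℝ, x = Real.sqrt ((L*kv - α*(σv*ε))^2 - (1-2*α)) := ⟨_, rfl⟩
      have hDd2 : Dd^2 = (L*kv - α*(σv*ε))^2 - (1-2*α) := hDdv ▸ Real.sq_sqrt hdisc
      have hDdnn : 0 ≤ Dd := hDdv ▸ Real.sqrt_nonneg _
      obtain ⟨ν, hνv⟩ : ∃ x : ℝ, x = L*kv - α*(σv*ε) + Dd := ⟨_, rfl⟩
      have hνpos : 0 < ν := by
        rw [hνv]
        linarith [mul_pos hLpos hkpos, mul_pos hα (neg_pos.mpr hlt), hDdnn]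
      have hνeq : ν^2 - 2*ν*(L*kv - α*(σv*ε)) + (1-α)^2 = α^2 := by
        have he : (ν - (L*kv - α*(σv*ε)))^2 = Dd^2 := by rw [hνv]; ring
        linear_combination he + hDd2
      have hu2 : ((ν*d0 - (1-α)*p0)/α)^2 + ((ν*d1 - (1-α)*p1)/α)^2 = 1 := by
        rw [div_pow, div_pow, ← add_div, div_eq_one_iff_eq (pow_ne_zero 2 hα.ne')]
        linear_combination ν^2*ud + (1-α)^2*up - 2*ν*hpdk + hνeq
      have hinst2 := hD ((ν*d0 - (1-α)*p0)/α) ((ν*d1 - (1-α)*p1)/α) hu2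
      have e0 : α*((ν*d0 - (1-α)*p0)/α) + (1-α)*p0 = ν*d0 := by field_simp; ring
      have e1 : α*((ν*d1 - (1-α)*p1)/α) + (1-α)*p1 = ν*d1 := by field_simp; ring
      rw [e0, e1] at hinst2
      have e2 : (ν*d0)^2 + (ν*d1)^2 = ν^2 := by linear_combination ν^2*ud
      rw [e2, Real.sqrt_sq hνpos.le] at hinst2
      have e3 : ν⁻¹ * ((ν*d0)*d0 + (ν*d1)*d1) = 1 := by
        rw [inv_mul_eq_div, div_eq_one_iff_eq hνpos.ne']
        linear_combination ν*ud
      rw [e3, hcdk, inv_mul_cancel_left₀ hLpos.ne'] at hinst2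
      -- hinst2 : 1 ≤ kv
      have h13 : (1:ℝ)*1 ≤ kv*kv :=
        mul_le_mul hinst2 hinst2 zero_le_one (le_trans zero_le_one hinst2)
      linarith [hkσ, hσsqpos, h13]
    · exfalso
      rcases mul_eq_zero.mp heq with h | h
      · exact hσ h
      · exact hεne h
    · exact hgt
  refine ⟨?_, ?_, ?_, ?_, ?_, ?_⟩
  · rw [← hσvv, ← hεv]; exact hsign
  · rw [← hεv]; exact hε2
  · rw [← hεv]; linarith [hq0]
  · rw [← hεv]; exact hq1
  · rw [← hεv, ← hLval]; exact hp0m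
  · rw [← hεv, ← hLval]; exact hp1m


set_option maxHeartbeats 1000000 in
/-- Theorem 2 (uniqueness/form): if `∠(θ*_A, θ*_D) < π − arcsin(α/(1−α))` and
`(θ'_A, θ'_D)` is any pure strategy Nash equilibrium, then with `s = sign(⟪θ*_D, R θ*_A⟫)`,
`θ'_D = s • R θ*_A` and `θ'_A = (√(1 − 2α) θ*_A − αs • R θ*_A)/(1 − α)`. -/
theorem stmt_13 (α : ℝ) (hα : 0 < α) (hα' : α < 1 / 2)
    (θAstar θDstar : EuclideanSpace ℝ (Fin 2))
    (hAs : ‖θAstar‖ = 1) (hDs : ‖θDstar‖ = 1) (hne : θAstar ≠ θDstar)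
    (hangle : Real.arccos (inner ℝ θAstar θDstar : ℝ) < Real.pi - Real.arcsin (α / (1 - α)))
    (θA' θD' : EuclideanSpace ℝ (Fin 2))
    (hNash : IsNashEq α θAstar θDstar θA' θD') :
    θD' = Real.sign (inner ℝ θDstar (Rot θAstar) : ℝ) • Rot θAstar ∧
    θA' = (1 - α)⁻¹ • (Real.sqrt (1 - 2 * α) • θAstar -
        (α * Real.sign (inner ℝ θDstar (Rot θAstar) : ℝ)) • Rot θAstar) := by
  obtain ⟨hA1, hD1, hABr, hDBr⟩ := hNash
  have ua := unit_coords _ hAs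
  have ud := unit_coords _ hDs
  have up := unit_coords _ hA1
  have uq := unit_coords _ hD1
  have hα1 : (0:ℝ) < 1 - α := by linarith
  -- σ ≠ 0
  have hσ : θAstar 0 * θDstar 1 - θAstar 1 * θDstar 0 ≠ 0 := by
    intro h
    have hk2 : (θAstar 0 * θDstar 0 + θAstar 1 * θDstar 1) *
        (θAstar 0 * θDstar 0 + θAstar 1 * θDstar 1) = 1 := by
      linear_combination (θDstar 0^2 + θDstar 1^2)*ua + ud
        - (θAstar 0 * θDstar 1 - θAstar 1 * θDstar 0)*h
    rcases mul_self_eq_one_iff.mp hk2 with hk1 | hk1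
    · apply hne
      apply ext2
      · linear_combination -(θAstar 0*hk1) + θAstar 1*h + θDstar 0*ua
      · linear_combination -(θAstar 1*hk1) - θAstar 0*h + θDstar 1*ua
    · have hik : (inner ℝ θAstar θDstar : ℝ) = -1 := by
        rw [inner2]; linarith [hk1]
      rw [hik, Real.arccos_neg_one] at hangle
      have harc : 0 < Real.arcsin (α/(1-α)) := Real.arcsin_pos.mpr (by positivity)
      linarith
  -- scalarized Nash conditions
  have hA : ∀ x0 x1 : ℝ, x0^2+x1^2 = 1 →
      (Real.sqrt ((α*(θD' 0) + (1-α)*x0)^2 + (α*(θD' 1) + (1-α)*x1)^2))⁻¹ *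
        ((α*(θD' 0) + (1-α)*x0)*(θAstar 0) + (α*(θD' 1) + (1-α)*x1)*(θAstar 1))
      ≤ (Real.sqrt ((α*(θD' 0) + (1-α)*(θA' 0))^2 + (α*(θD' 1) + (1-α)*(θA' 1))^2))⁻¹ *
        ((α*(θD' 0) + (1-α)*(θA' 0))*(θAstar 0) + (α*(θD' 1) + (1-α)*(θA' 1))*(θAstar 1)) := by
    intro x0 x1 hx
    have hinst := hABr (mk2 x0 x1) (unit_mk2 x0 x1 hx)
    rw [agg_inner, agg_inner] at hinst
    simpa only [mk2_zero, mk2_one] using hinst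
  have hD : ∀ y0 y1 : ℝ, y0^2+y1^2 = 1 →
      (Real.sqrt ((α*y0 + (1-α)*(θA' 0))^2 + (α*y1 + (1-α)*(θA' 1))^2))⁻¹ *
        ((α*y0 + (1-α)*(θA' 0))*(θDstar 0) + (α*y1 + (1-α)*(θA' 1))*(θDstar 1))
      ≤ (Real.sqrt ((α*(θD' 0) + (1-α)*(θA' 0))^2 + (α*(θD' 1) + (1-α)*(θA' 1))^2))⁻¹ *
        ((α*(θD' 0) + (1-α)*(θA' 0))*(θDstar 0) + (α*(θD' 1) + (1-α)*(θA' 1))*(θDstar 1)) := by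
    intro y0 y1 hy
    have hinst := hDBr (mk2 y0 y1) (unit_mk2 y0 y1 hy)
    rw [agg_inner, agg_inner] at hinst
    simpa only [mk2_zero, mk2_one] using hinst
  obtain ⟨hsgn, hε2, hq0, hq1, hp0, hp1⟩ :=
    masterA α (θAstar 0) (θAstar 1) (θDstar 0) (θDstar 1) (θA' 0) (θA' 1) (θD' 0) (θD' 1)
      hα hα' ua ud up uq hσ hA hD
  have hRot0 : Rot θAstar 0 = -(θAstar 1) := rfl
  have hRot1 : Rot θAstar 1 = θAstar 0 := rfl
  have hinnerRot : (inner ℝ θDstar (Rot θAstar) : ℝ)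
      = θAstar 0 * θDstar 1 - θAstar 1 * θDstar 0 := by
    rw [inner2, hRot0, hRot1]; ring
  have hεcases : (θAstar 0 * θD' 1 - θAstar 1 * θD' 0) = 1
      ∨ (θAstar 0 * θD' 1 - θAstar 1 * θD' 0) = -1 := by
    apply mul_self_eq_one_iff.mp
    rw [← sq]; exact hε2
  have hse : Real.sign (inner ℝ θDstar (Rot θAstar) : ℝ)
      = θAstar 0 * θD' 1 - θAstar 1 * θD' 0 := by
    rw [hinnerRot]
    rcases lt_trichotomy (θAstar 0 * θDstar 1 - θAstar 1 * θDstar 0) 0 with hc | hc | hc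
    · rw [Real.sign_of_neg hc]
      rcases hεcases with he | he
      · exfalso
        rw [he, mul_one] at hsgn
        linarith
      · rw [he]
    · exact absurd hc hσ
    · rw [Real.sign_of_pos hc]
      rcases hεcases with he | he
      · rw [he]
      · exfalso
        rw [he] at hsgn
        nlinarith [hsgn, hc]
  constructor
  · apply ext2
    · simp only [PiLp.smul_apply, smul_eq_mul, hse, hRot0]
      linear_combination hq0
    · simp only [PiLp.smul_apply, smul_eq_mul, hse, hRot1]
      linear_combination hq1
  · apply ext2
    · simp only [PiLp.smul_apply, PiLp.sub_apply, smul_eq_mul, hse, hRot0]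
      rw [inv_mul_eq_div, eq_div_iff hα1.ne']
      linear_combination hp0
    · simp only [PiLp.smul_apply, PiLp.sub_apply, smul_eq_mul, hse, hRot1]
      rw [inv_mul_eq_div, eq_div_iff hα1.ne']
      linear_combination hp1
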